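/- Let Y: X → (0,∞) be measurable with ∫_X Y dν < ∞, and define V(x,y) = sup_{c>0} ( U(x,c) − c·y ) for y > 0 (the pointwise convex conjugate; V(x,Y(x)) is measurable in x and ∫_X V(x,Y(x)) dν > −∞). Then sup_c ( ∫_X U(x,c(x)) dν(x) − ∫_X c(x) Y(x) dν(x) ) = ∫_X V(x, Y(x)) dν(x), as an equality in (−∞, +∞], where the supremum is taken over all measurable functions c: X → (0,∞) satisfying ∫_X (U(x,c(x)))⁻ dν(x) < ∞ and ∫_X c(x) Y(x) dν(x) < ∞. -/

import Mathlib

open MeasureTheory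


lemma lint_neg_ne_top {X : Type*} [MeasurableSpace X] {ν : Measure X} {f : X → ℝ}
    (hf : Integrable f ν) : ∫⁻ x, ENNReal.ofReal (-(f x)) ∂ν ≠ ⊤ := by
  have hle : ∫⁻ x, ENNReal.ofReal (-(f x)) ∂ν ≤ ∫⁻ x, ‖f x‖₊ ∂ν := by
    apply lintegral_mono
    intro x
    simp only [← enorm_eq_nnnorm, ← ofReal_norm]
    exact ENNReal.ofReal_le_ofReal (neg_le_abs _)
  exact ne_top_of_le_ne_top hf.2.ne hle

lemma lint_pos_ne_top {X : Type*} [MeasurableSpace X] {ν : Measure X} {f : X → ℝ}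
    (hf : Integrable f ν) : ∫⁻ x, ENNReal.ofReal (f x) ∂ν ≠ ⊤ := by
  have := lint_neg_ne_top (ν := ν) (f := fun x => -f x) hf.neg
  simpa using this

lemma ereal_coe_ennreal_of_toReal {a : ENNReal} (ha : a ≠ ⊤) :
    ((a.toReal : ℝ) : EReal) = (a : EReal) := by
  conv_rhs => rw [← ENNReal.ofReal_toReal ha]
  rw [EReal.coe_ennreal_ofReal, max_eq_left ENNReal.toReal_nonneg]

lemma ereal_diff_eq_integral {X : Type*} [MeasurableSpace X] {ν : Measure X} {f : X → ℝ}
    (hf : Integrable f ν) :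
    ((∫⁻ x, ENNReal.ofReal (f x) ∂ν : ENNReal) : EReal)
      - ((∫⁻ x, ENNReal.ofReal (-(f x)) ∂ν : ENNReal) : EReal) = ((∫ x, f x ∂ν : ℝ) : EReal) := by
  rw [integral_eq_lintegral_pos_part_sub_lintegral_neg_part hf, EReal.coe_sub,
    ereal_coe_ennreal_of_toReal (lint_pos_ne_top hf),
    ereal_coe_ennreal_of_toReal (lint_neg_ne_top hf)]

lemma integrable_of_lintegrals {X : Type*} [MeasurableSpace X] {ν : Measure X} {f : X → ℝ}
    (hm : Measurable f) (h1 : ∫⁻ x, ENNReal.ofReal (f x) ∂ν ≠ ⊤)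
    (h2 : ∫⁻ x, ENNReal.ofReal (-(f x)) ∂ν ≠ ⊤) : Integrable f ν := by
  refine ⟨hm.aestronglyMeasurable, ?_⟩
  have key : ∀ x : ℝ, (‖x‖₊ : ENNReal) = ENNReal.ofReal x + ENNReal.ofReal (-x) := by
    intro x
    rcases le_total 0 x with h | h
    · have h0 : ENNReal.ofReal (-x) = 0 := ENNReal.ofReal_eq_zero.2 (neg_nonpos.2 h)
      rw [h0, add_zero, ← enorm_eq_nnnorm, ← ofReal_norm, Real.norm_of_nonneg h]
    · have h0 : ENNReal.ofReal x = 0 := ENNReal.ofReal_eq_zero.2 h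
      rw [h0, zero_add, ← enorm_eq_nnnorm, ← ofReal_norm, Real.norm_of_nonpos h]
  rw [HasFiniteIntegral]
  calc ∫⁻ x, ‖f x‖₊ ∂ν = ∫⁻ x, (ENNReal.ofReal (f x) + ENNReal.ofReal (-(f x))) ∂ν := by
        simp_rw [key]
    _ = (∫⁻ x, ENNReal.ofReal (f x) ∂ν) + ∫⁻ x, ENNReal.ofReal (-(f x)) ∂ν :=
        lintegral_add_left (hm.ennreal_ofReal) _
    _ < ⊤ := ENNReal.add_lt_top.2 ⟨h1.lt_top, h2.lt_top⟩

/-- The functional `c ↦ ∫ U(x, c(x)) dν`, as an extended-real number, with the convention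
that the value is `−∞` (`⊥`) whenever the integral of the negative part is infinite
(in `EReal`, `⊤ - ⊤ = ⊥`, so the subtraction below implements this convention). -/
noncomputable def utilityFunctional {X : Type*} [MeasurableSpace X] (ν : Measure X)
    (U : X → ℝ → ℝ) (c : X → ℝ) : EReal :=
  ((∫⁻ x, ENNReal.ofReal (U x (c x)) ∂ν : ENNReal) : EReal) -
    ((∫⁻ x, ENNReal.ofReal (-(U x (c x))) ∂ν : ENNReal) : EReal)

/-- Representation formula of Proposition 4.1, in abstract form: for a measurable `Y > 0`
with `∫ Y dν < ∞`, and `V(x,y) = sup_{c>0} (U(x,c) − c·y)` the pointwise convex conjugate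
(with `x ↦ V(x,Y(x))` measurable and `∫ V(x,Y(x)) dν > −∞`),
`sup_c ( ∫ U(x,c(x)) dν − ∫ c(x)Y(x) dν ) = ∫ V(x,Y(x)) dν`, as an equality in `(−∞,+∞]`,
the supremum being over measurable `c : X → (0,∞)` with `∫ (U(x,c(x)))⁻ dν < ∞` and
`∫ c·Y dν < ∞`. -/
theorem conjugate_representation
    {X : Type*} [MeasurableSpace X] (ν : Measure X) [IsProbabilityMeasure ν]
    (U U' : X → ℝ → ℝ) (K₁ K₂ : ℝ → ℝ) (G D : ℝ) (hGD : G ≤ D)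
    (hU_meas : Measurable (Function.uncurry U))
    (hU_concave : ∀ x, StrictConcaveOn ℝ (Set.Ioi 0) (U x))
    (hU_mono : ∀ x, StrictMonoOn (U x) (Set.Ioi 0))
    (hU_deriv : ∀ x, ∀ c ∈ Set.Ioi (0 : ℝ), HasDerivAt (U x) (U' x c) c)
    (hU'_cont : ∀ x, ContinuousOn (U' x) (Set.Ioi 0))
    -- the Inada conditions
    (h_inada_zero : ∀ x, Filter.Tendsto (U' x) (nhdsWithin 0 (Set.Ioi 0)) Filter.atTop)
    (h_inada_infty : ∀ x, Filter.Tendsto (U' x) Filter.atTop (nhds 0))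
    -- the bounds `K₁ ≤ ∂_c U ≤ K₂` and `G ≤ U(x,1) ≤ D`
    (hK₁_cont : ContinuousOn K₁ (Set.Ioi 0)) (hK₂_cont : ContinuousOn K₂ (Set.Ioi 0))
    (hK₁_anti : StrictAntiOn K₁ (Set.Ioi 0)) (hK₂_anti : StrictAntiOn K₂ (Set.Ioi 0))
    (hK₁_pos : ∀ c ∈ Set.Ioi (0 : ℝ), 0 < K₁ c) (hK₂_pos : ∀ c ∈ Set.Ioi (0 : ℝ), 0 < K₂ c)
    (hU'_ge : ∀ x, ∀ c ∈ Set.Ioi (0 : ℝ), K₁ c ≤ U' x c)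
    (hU'_le : ∀ x, ∀ c ∈ Set.Ioi (0 : ℝ), U' x c ≤ K₂ c)
    (hG : ∀ x, G ≤ U x 1) (hD : ∀ x, U x 1 ≤ D)
    -- the pointwise convex conjugate `V(x,y) = sup_{c>0} (U(x,c) − c·y)`
    (V : X → ℝ → ℝ)
    (hV : ∀ x : X, ∀ y : ℝ, 0 < y →
      IsLUB {r : ℝ | ∃ c : ℝ, 0 < c ∧ r = U x c - c * y} (V x y))
    -- the dual variable `Y`
    (Y : X → ℝ) (hY_meas : Measurable Y) (hY_pos : ∀ x, 0 < Y x)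
    (hY_int : Integrable Y ν)
    (hVY_meas : Measurable fun x => V x (Y x))
    (hVY_neg : ∫⁻ x, ENNReal.ofReal (-(V x (Y x))) ∂ν ≠ ⊤) :
    sSup {z : EReal | ∃ c : X → ℝ, Measurable c ∧ (∀ x, 0 < c x) ∧
        (∫⁻ x, ENNReal.ofReal (-(U x (c x))) ∂ν ≠ ⊤) ∧
        Integrable (fun x => c x * Y x) ν ∧
        z = utilityFunctional ν U c - ((∫ x, c x * Y x ∂ν : ℝ) : EReal)}
      = utilityFunctional ν V Y := by
  classical
  -- measurability helper
  have hcomp_meas : ∀ {cc : X → ℝ}, Measurable cc → Measurable (fun x => U x (cc x)) := by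
    intro cc hcc
    exact hU_meas.comp (measurable_id.prodMk hcc)
  have hK21 : 0 < K₂ 1 := hK₂_pos 1 (Set.mem_Ioi.2 one_pos)
  -- upper bound on U via MVT
  have hUub : ∀ x : X, ∀ c' : ℝ, 0 < c' → U x c' ≤ D + K₂ 1 * max c' 1 := by
    intro x c' hc'
    rcases le_or_gt c' 1 with h | h
    · have h1 : U x c' ≤ U x 1 := by
        rcases eq_or_lt_of_le h with h' | h'
        · exact le_of_eq (by rw [h'])
        · exact (hU_mono x (Set.mem_Ioi.2 hc') (Set.mem_Ioi.2 one_pos) h').le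
      have h2 : (1:ℝ) ≤ max c' 1 := le_max_right _ _
      nlinarith [hD x]
    · obtain ⟨ξ, hξ, hslope⟩ := exists_hasDerivAt_eq_slope (U x) (U' x) h
        (fun y hy => (hU_deriv x y (Set.mem_Ioi.2 (lt_of_lt_of_le one_pos hy.1))).continuousAt.continuousWithinAt)
        (fun y hy => hU_deriv x y (Set.mem_Ioi.2 (lt_trans one_pos hy.1)))
      have hξ0 : ξ ∈ Set.Ioi (0:ℝ) := Set.mem_Ioi.2 (lt_trans one_pos hξ.1)
      have h1 : U' x ξ ≤ K₂ 1 :=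
        le_trans (hU'_le x ξ hξ0) (hK₂_anti (Set.mem_Ioi.2 one_pos) hξ0 hξ.1).le
      have h2 : K₁ ξ ≤ U' x ξ := hU'_ge x ξ hξ0
      have h3 : 0 < K₁ ξ := hK₁_pos ξ hξ0
      have heq : U x c' - U x 1 = U' x ξ * (c' - 1) := by
        rw [hslope, div_mul_cancel₀ _ (sub_ne_zero.2 (ne_of_gt h))]
      have h4 : c' ≤ max c' 1 := le_max_left _ _
      nlinarith [hD x]
  -- the dense sequence of positive reals
  set e : ℕ → ℝ := TopologicalSpace.denseSeq ℝ with he_def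
  have he : DenseRange e := TopologicalSpace.denseRange_denseSeq ℝ
  set q : ℕ → ℝ := fun n => Nat.casesOn n 1 (fun m => if 0 < e m then e m else 1) with hq_def
  have hq_pos : ∀ n, 0 < q n := by
    intro n
    cases n with
    | zero => exact one_pos
    | succ m => by_cases h : 0 < e m <;> simp [hq_def, h]
  have hq0 : q 0 = 1 := rfl
  -- the recursive argmax selector
  set c : ℕ → X → ℝ := fun n => Nat.rec (motive := fun _ => X → ℝ) (fun _ => q 0)
    (fun n cn x => if U x (q (n+1)) - q (n+1) * Y x ≤ U x (cn x) - cn x * Y x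
      then cn x else q (n+1)) n with hc_def
  have hc0 : ∀ x, c 0 x = 1 := fun _ => rfl
  have hcsucc : ∀ n x, c (n+1) x =
      if U x (q (n+1)) - q (n+1) * Y x ≤ U x (c n x) - c n x * Y x
      then c n x else q (n+1) := fun n x => rfl
  set F : ℕ → X → ℝ := fun n x => U x (c n x) - c n x * Y x with hF_def
  have hc_pos : ∀ n x, 0 < c n x := by
    intro n
    induction n with
    | zero => intro x; rw [hc0]; exact one_pos
    | succ m ih =>
        intro x
        rw [hcsucc]
        split_ifs
        · exact ih x
        · exact hq_pos (m+1)
  set Q : ℕ → ℝ := fun n => Nat.rec (q 0) (fun n Qn => max Qn (q (n+1))) n with hQ_def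
  have hQsucc : ∀ n, Q (n+1) = max (Q n) (q (n+1)) := fun n => rfl
  have hc_le : ∀ n x, c n x ≤ Q n := by
    intro n
    induction n with
    | zero => intro x; rw [hc0]; exact le_of_eq hq0.symm
    | succ m ih =>
        intro x
        rw [hcsucc, hQsucc]
        split_ifs
        · exact le_trans (ih x) (le_max_left _ _)
        · exact le_max_right _ _
  have hc_meas : ∀ n, Measurable (c n) := by
    intro n
    induction n with
    | zero => exact measurable_const
    | succ m ih =>
        have h1 : Measurable (fun x => U x (q (m+1)) - q (m+1) * Y x) :=
          (hcomp_meas measurable_const).sub (hY_meas.const_mul _)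
        have h2 : Measurable (fun x => U x (c m x) - c m x * Y x) :=
          (hcomp_meas ih).sub (ih.mul hY_meas)
        exact Measurable.ite (measurableSet_le h1 h2) ih measurable_const
  have hF_meas : ∀ n, Measurable (F n) := fun n =>
    (hcomp_meas (hc_meas n)).sub ((hc_meas n).mul hY_meas)
  have hFsucc : ∀ n x, F (n+1) x = max (F n x) (U x (q (n+1)) - q (n+1) * Y x) := by
    intro n x
    simp only [hF_def, hcsucc]
    split_ifs with h
    · exact (max_eq_left h).symm
    · exact (max_eq_right (le_of_not_ge h)).symm
  have hF_mono : ∀ x, Monotone fun n => F n x := by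
    intro x
    apply monotone_nat_of_le_succ
    intro n
    rw [hFsucc]
    exact le_max_left _ _
  have hF_ge_q : ∀ n x, U x (q n) - q n * Y x ≤ F n x := by
    intro n x
    cases n with
    | zero => simp only [hF_def, hc0, hq0]; exact le_rfl
    | succ m => rw [hFsucc]; exact le_max_right _ _
  have hF0 : ∀ x, F 0 x = U x 1 - Y x := by
    intro x; simp only [hF_def, hc0, one_mul]
  have hF_le_W : ∀ n x, F n x ≤ V x (Y x) := fun n x =>
    (hV x (Y x) (hY_pos x)).1 ⟨c n x, hc_pos n x, rfl⟩
  have hW_lub : ∀ x, IsLUB (Set.range fun n => F n x) (V x (Y x)) := by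
    intro x
    constructor
    · rintro _ ⟨n, rfl⟩; exact hF_le_W n x
    · intro b hb
      apply (hV x (Y x) (hY_pos x)).2
      rintro r ⟨cc, hcc, rfl⟩
      by_contra hlt
      push_neg at hlt
      have hg_cont : ContinuousAt (fun y => U x y - y * Y x) cc :=
        ((hU_deriv x cc (Set.mem_Ioi.2 hcc)).continuousAt).sub
          (continuousAt_id.mul continuousAt_const)
      have hnhds : {y : ℝ | b < U x y - y * Y x} ∈ nhds cc := by
        have := hg_cont (Ioi_mem_nhds hlt)
        simpa [Set.preimage] using this
      have hmem2 : ({y : ℝ | b < U x y - y * Y x} ∩ Set.Ioi 0) ∈ nhds cc :=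
        Filter.inter_mem hnhds (isOpen_Ioi.mem_nhds (Set.mem_Ioi.2 hcc))
      obtain ⟨O, hO_sub, hO_open, hcc_mem⟩ := mem_nhds_iff.1 hmem2
      obtain ⟨m, hm⟩ := he.exists_mem_open hO_open ⟨cc, hcc_mem⟩
      have hem : 0 < e m := (hO_sub hm).2
      have hqm : q (m+1) = e m := by simp [hq_def, hem]
      have hb1 : b < U x (q (m+1)) - q (m+1) * Y x := by
        rw [hqm]; exact (hO_sub hm).1
      have hb2 : U x (q (m+1)) - q (m+1) * Y x ≤ b :=
        le_trans (hF_ge_q (m+1) x) (hb ⟨m+1, rfl⟩)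
      linarith
  have hF_tendsto : ∀ x, Filter.Tendsto (fun n => F n x) Filter.atTop (nhds (V x (Y x))) :=
    fun x => tendsto_atTop_isLUB (hF_mono x) (hW_lub x)
  -- integrability of the approximating sequence
  have hUc_le : ∀ n x, U x (c n x) ≤ D + K₂ 1 * max (Q n) 1 := by
    intro n x
    refine le_trans (hUub x (c n x) (hc_pos n x)) ?_
    have : max (c n x) 1 ≤ max (Q n) 1 := max_le_max (hc_le n x) le_rfl
    nlinarith
  have hUc_ge : ∀ n x, G - Y x ≤ U x (c n x) := by
    intro n x
    have h1 : F 0 x ≤ F n x := hF_mono x (Nat.zero_le n)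
    rw [hF0] at h1
    have h2 : 0 < c n x * Y x := mul_pos (hc_pos n x) (hY_pos x)
    have h3 : F n x = U x (c n x) - c n x * Y x := rfl
    have h4 := hG x
    linarith
  have hUc_int : ∀ n, Integrable (fun x => U x (c n x)) ν := by
    intro n
    set B : ℝ := D + K₂ 1 * max (Q n) 1 with hB
    refine Integrable.mono' ((integrable_const (|B| + |G|)).add hY_int)
      (hcomp_meas (hc_meas n)).aestronglyMeasurable (Filter.Eventually.of_forall fun x => ?_)
    have h1 := hUc_le n x
    have h2 := hUc_ge n x
    have h3 := hY_pos x
    rw [Real.norm_eq_abs, abs_le]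
    constructor
    · have := abs_nonneg B
      have := neg_abs_le G
      simp only [Pi.add_apply]
      linarith
    · have := le_abs_self B
      have := abs_nonneg G
      simp only [Pi.add_apply]
      linarith
  have hcY_int : ∀ n, Integrable (fun x => c n x * Y x) ν := by
    intro n
    refine Integrable.mono' (hY_int.const_mul (Q n))
      ((hc_meas n).mul hY_meas).aestronglyMeasurable (Filter.Eventually.of_forall fun x => ?_)
    rw [Real.norm_of_nonneg (mul_pos (hc_pos n x) (hY_pos x)).le]
    exact mul_le_mul_of_nonneg_right (hc_le n x) (hY_pos x).le
  have hF_int : ∀ n, Integrable (F n) ν := fun n => (hUc_int n).sub (hcY_int n)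
  -- membership of the approximating values
  have hmem : ∀ n, ((∫ x, F n x ∂ν : ℝ) : EReal) ∈ {z : EReal | ∃ c : X → ℝ, Measurable c ∧
      (∀ x, 0 < c x) ∧ (∫⁻ x, ENNReal.ofReal (-(U x (c x))) ∂ν ≠ ⊤) ∧
      Integrable (fun x => c x * Y x) ν ∧
      z = utilityFunctional ν U c - ((∫ x, c x * Y x ∂ν : ℝ) : EReal)} := by
    intro n
    refine ⟨c n, hc_meas n, hc_pos n, lint_neg_ne_top (hUc_int n), hcY_int n, ?_⟩
    rw [utilityFunctional, ereal_diff_eq_integral (hUc_int n), ← EReal.coe_sub,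
      ← integral_sub (hUc_int n) (hcY_int n)]
  -- the two inequalities
  apply le_antisymm
  · -- sSup ≤ RHS
    apply sSup_le
    rintro z ⟨cc, hcc_meas, hcc_pos, hcc_neg, hccY_int, rfl⟩
    have h_le : ∀ x, U x (cc x) - cc x * Y x ≤ V x (Y x) := fun x =>
      (hV x (Y x) (hY_pos x)).1 ⟨cc x, hcc_pos x, rfl⟩
    by_cases hP : ∫⁻ x, ENNReal.ofReal (U x (cc x)) ∂ν = ⊤
    · -- RHS is ⊤
      have hWtop : ∫⁻ x, ENNReal.ofReal (V x (Y x)) ∂ν = ⊤ := by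
        by_contra hW
        have hbd : ∀ x, ENNReal.ofReal (U x (cc x)) ≤
            ENNReal.ofReal (V x (Y x)) + ENNReal.ofReal (cc x * Y x) := by
          intro x
          refine le_trans (ENNReal.ofReal_le_ofReal ?_) ENNReal.ofReal_add_le
          linarith [h_le x]
        have hmm : ∫⁻ x, ENNReal.ofReal (U x (cc x)) ∂ν ≤
            ∫⁻ x, (ENNReal.ofReal (V x (Y x)) + ENNReal.ofReal (cc x * Y x)) ∂ν :=
          lintegral_mono hbd
        rw [hP, lintegral_add_left hVY_meas.ennreal_ofReal] at hmm
        exact absurd (top_le_iff.1 hmm)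
          (ENNReal.add_ne_top.2 ⟨hW, lint_pos_ne_top hccY_int⟩)
      have hRHS : utilityFunctional ν V Y = ⊤ := by
        rw [utilityFunctional, hWtop, EReal.coe_ennreal_top,
          ← ereal_coe_ennreal_of_toReal hVY_neg, EReal.top_sub_coe]
      rw [hRHS]
      exact le_top
    · have hint : Integrable (fun x => U x (cc x)) ν :=
        integrable_of_lintegrals (hcomp_meas hcc_meas) hP hcc_neg
      rw [utilityFunctional, ereal_diff_eq_integral hint, ← EReal.coe_sub,
        ← integral_sub hint hccY_int]
      by_cases hW : ∫⁻ x, ENNReal.ofReal (V x (Y x)) ∂ν = ⊤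
      · have hRHS : utilityFunctional ν V Y = ⊤ := by
          rw [utilityFunctional, hW, EReal.coe_ennreal_top,
            ← ereal_coe_ennreal_of_toReal hVY_neg, EReal.top_sub_coe]
        rw [hRHS]
        exact le_top
      · have hWint : Integrable (fun x => V x (Y x)) ν :=
          integrable_of_lintegrals hVY_meas hW hVY_neg
        have hRHS : utilityFunctional ν V Y = ((∫ x, V x (Y x) ∂ν : ℝ) : EReal) := by
          rw [utilityFunctional, ereal_diff_eq_integral hWint]
        rw [hRHS, EReal.coe_le_coe_iff]
        exact integral_mono (hint.sub hccY_int) hWint h_le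
  · -- RHS ≤ sSup
    by_cases hW : ∫⁻ x, ENNReal.ofReal (V x (Y x)) ∂ν = ⊤
    · -- show sSup = ⊤ via unbounded approximations
      set a : ℕ → ENNReal := fun n => ∫⁻ x, ENNReal.ofReal (F n x - F 0 x) ∂ν with ha_def
      have hFd_meas : ∀ n, Measurable fun x => ENNReal.ofReal (F n x - F 0 x) := fun n =>
        ((hF_meas n).sub (hF_meas 0)).ennreal_ofReal
      have hFd_mono : Monotone fun n => fun x => ENNReal.ofReal (F n x - F 0 x) := by
        intro m n hmn x
        exact ENNReal.ofReal_le_ofReal (sub_le_sub_right (hF_mono x hmn) _)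
      have hsup_eq : ∀ x, (⨆ n, ENNReal.ofReal (F n x - F 0 x))
          = ENNReal.ofReal (V x (Y x) - F 0 x) := by
        intro x
        have htends : Filter.Tendsto (fun n => ENNReal.ofReal (F n x - F 0 x)) Filter.atTop
            (nhds (ENNReal.ofReal (V x (Y x) - F 0 x))) := by
          exact (ENNReal.continuous_ofReal.continuousAt).tendsto.comp
            ((hF_tendsto x).sub_const _)
        have hmono : Monotone fun n => ENNReal.ofReal (F n x - F 0 x) := fun m n hmn =>
          ENNReal.ofReal_le_ofReal (sub_le_sub_right (hF_mono x hmn) _)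
        exact tendsto_nhds_unique (tendsto_atTop_iSup hmono) htends
      have hlsup : (⨆ n, a n) = ∫⁻ x, ENNReal.ofReal (V x (Y x) - F 0 x) ∂ν := by
        rw [← lintegral_iSup hFd_meas hFd_mono]
        congr 1
        ext x
        exact hsup_eq x
      have hF0_int : Integrable (F 0) ν := hF_int 0
      have htop : ∫⁻ x, ENNReal.ofReal (V x (Y x) - F 0 x) ∂ν = ⊤ := by
        by_contra hne
        have hbd : ∀ x, ENNReal.ofReal (V x (Y x)) ≤
            ENNReal.ofReal (V x (Y x) - F 0 x) + ENNReal.ofReal (F 0 x) := by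
          intro x
          refine le_trans (ENNReal.ofReal_le_ofReal (by linarith : V x (Y x) ≤ V x (Y x) - F 0 x + F 0 x)) ENNReal.ofReal_add_le
        have hmm : ∫⁻ x, ENNReal.ofReal (V x (Y x)) ∂ν ≤
            ∫⁻ x, (ENNReal.ofReal (V x (Y x) - F 0 x) + ENNReal.ofReal (F 0 x)) ∂ν :=
          lintegral_mono hbd
        rw [hW, lintegral_add_left (f := fun x => ENNReal.ofReal (V x (Y x) - F 0 x)) (hVY_meas.sub (hF_meas 0)).ennreal_ofReal] at hmm
        exact absurd (top_le_iff.1 hmm)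
          (ENNReal.add_ne_top.2 ⟨hne, lint_pos_ne_top hF0_int⟩)
      have hsup_top : (⨆ n, a n) = ⊤ := by rw [hlsup, htop]
      have ha_ne : ∀ n, a n ≠ ⊤ := fun n => lint_pos_ne_top ((hF_int n).sub hF0_int)
      have hInt_eq : ∀ n, ∫ x, F n x ∂ν = (a n).toReal + ∫ x, F 0 x ∂ν := by
        intro n
        have h1 : ∫ x, (F n x - F 0 x) ∂ν = (a n).toReal := by
          rw [integral_eq_lintegral_of_nonneg_ae
            (Filter.Eventually.of_forall fun x => sub_nonneg.2 (hF_mono x (Nat.zero_le n)))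
            ((hF_meas n).sub (hF_meas 0)).aestronglyMeasurable]
        have h2 : ∫ x, (F n x - F 0 x) ∂ν = ∫ x, F n x ∂ν - ∫ x, F 0 x ∂ν :=
          integral_sub (hF_int n) hF0_int
        linarith
      -- conclude sSup = ⊤
      have hRHS : utilityFunctional ν V Y = ⊤ := by
        rw [utilityFunctional, hW, EReal.coe_ennreal_top,
          ← ereal_coe_ennreal_of_toReal hVY_neg, EReal.top_sub_coe]
      rw [hRHS]
      by_contra hcon
      push_neg at hcon
      obtain ⟨M, hM1, hM2⟩ := EReal.exists_between_coe_real hcon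
      set t : ℝ := max (M - ∫ x, F 0 x ∂ν) 0 with ht_def
      have hoft : ENNReal.ofReal t < ⨆ n, a n := by
        rw [hsup_top]; exact ENNReal.ofReal_lt_top
      obtain ⟨n, hn⟩ := lt_iSup_iff.1 hoft
      have hto : t < (a n).toReal := by
        have := (ENNReal.toReal_lt_toReal ENNReal.ofReal_ne_top (ha_ne n)).2 hn
        rwa [ENNReal.toReal_ofReal (le_max_right _ _)] at this
      have hMn : M < ∫ x, F n x ∂ν := by
        rw [hInt_eq n]
        have : M - ∫ x, F 0 x ∂ν ≤ t := le_max_left _ _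
        linarith
      have hle : ((∫ x, F n x ∂ν : ℝ) : EReal) ≤ sSup {z : EReal | ∃ c : X → ℝ, Measurable c ∧
          (∀ x, 0 < c x) ∧ (∫⁻ x, ENNReal.ofReal (-(U x (c x))) ∂ν ≠ ⊤) ∧
          Integrable (fun x => c x * Y x) ν ∧
          z = utilityFunctional ν U c - ((∫ x, c x * Y x ∂ν : ℝ) : EReal)} := le_sSup (hmem n)
      have : (M : EReal) < ((∫ x, F n x ∂ν : ℝ) : EReal) := EReal.coe_lt_coe_iff.2 hMn
      exact absurd (lt_of_lt_of_le this hle) (not_lt.2 hM1.le)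
    · have hWint : Integrable (fun x => V x (Y x)) ν :=
        integrable_of_lintegrals hVY_meas hW hVY_neg
      have hRHS : utilityFunctional ν V Y = ((∫ x, V x (Y x) ∂ν : ℝ) : EReal) := by
        rw [utilityFunctional, ereal_diff_eq_integral hWint]
      rw [hRHS]
      have htend : Filter.Tendsto (fun n => ∫ x, F n x ∂ν) Filter.atTop
          (nhds (∫ x, V x (Y x) ∂ν)) :=
        integral_tendsto_of_tendsto_of_monotone hF_int hWint
          (Filter.Eventually.of_forall fun x => hF_mono x)
          (Filter.Eventually.of_forall fun x => hF_tendsto x)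
      have htendE : Filter.Tendsto (fun n => ((∫ x, F n x ∂ν : ℝ) : EReal)) Filter.atTop
          (nhds ((∫ x, V x (Y x) ∂ν : ℝ) : EReal)) :=
        (EReal.tendsto_coe).2 htend
      exact le_of_tendsto htendE (Filter.Eventually.of_forall fun n => le_sSup (hmem n))
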